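/- For all natural numbers n and sequences a, b in a commutative ring, Σ_{i=0}^n C(n,i) Σ_{k=0}^i Σ_{j=0}^k C(i,k) C(k,j) a_k b_{i-j} = (Σ_{s=0}^n C(n,s) a_s) · (Σ_{t=0}^n C(n,t) b_t). -/

import Mathlib

open Finset

lemma aux_vand {R : Type*} [CommRing R] :
    ∀ (p : ℕ) (b : ℕ → R) (q : ℕ),
      (∑ d ∈ Finset.range (p + 1), ∑ e ∈ Finset.range (q + 1),
        (p.choose d : R) * (q.choose e : R) * b (d + e)) =
      ∑ t ∈ Finset.range (p + q + 1), ((p + q).choose t : R) * b t := by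
  intro p
  induction p with
  | zero => intro b q; simp
  | succ p ih =>
    intro b q
    have key : ∀ (c : ℕ → R),
        (∑ d ∈ Finset.range (p + 2), ∑ e ∈ Finset.range (q + 1),
          (p.choose d : R) * (q.choose e : R) * c (d + e)) =
        ∑ t ∈ Finset.range (p + q + 1), ((p + q).choose t : R) * c t := by
      intro c
      rw [Finset.sum_range_succ]
      simp [ih c q]
    calc
      (∑ d ∈ Finset.range (p + 1 + 1), ∑ e ∈ Finset.range (q + 1),
          ((p+1).choose d : R) * (q.choose e : R) * b (d + e))
        = (∑ d ∈ Finset.range (p + 1), ∑ e ∈ Finset.range (q + 1),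
            (p.choose d : R) * (q.choose e : R) * b (d + e + 1)) +
          (∑ d ∈ Finset.range (p + 2), ∑ e ∈ Finset.range (q + 1),
            (p.choose d : R) * (q.choose e : R) * b (d + e)) := by
          rw [Finset.sum_range_succ' _ (p + 1),
            Finset.sum_range_succ' (fun d => ∑ e ∈ Finset.range (q + 1),
              (p.choose d : R) * (q.choose e : R) * b (d + e)) (p + 1)]
          rw [← add_assoc]
          congr 1
          · rw [← Finset.sum_add_distrib]
            refine Finset.sum_congr rfl fun d _ => ?_
            rw [← Finset.sum_add_distrib]
            refine Finset.sum_congr rfl fun e _ => ?_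
            rw [show d + 1 + e = d + e + 1 by omega, Nat.choose_succ_succ]
            push_cast
            ring
          · simp
      _ = (∑ t ∈ Finset.range (p + q + 1), ((p + q).choose t : R) * b (t + 1)) +
          ∑ t ∈ Finset.range (p + q + 1), ((p + q).choose t : R) * b t := by
          rw [key b, ih (fun t => b (t + 1)) q]
      _ = ∑ t ∈ Finset.range (p + 1 + q + 1), ((p + 1 + q).choose t : R) * b t := by
          rw [show p + 1 + q + 1 = (p + q + 1) + 1 by omega,
            Finset.sum_range_succ' _ (p + q + 1)]
          have h1 : ∀ k : ℕ, ((p + 1 + q).choose (k + 1) : R)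
              = ((p + q).choose k : R) + ((p + q).choose (k + 1) : R) := by
            intro k
            rw [show p + 1 + q = (p + q) + 1 by omega, Nat.choose_succ_succ]
            push_cast; ring
          simp only [h1, add_mul, Finset.sum_add_distrib, Nat.choose_zero_right,
            Nat.cast_one, one_mul]
          have h2 := Finset.sum_range_succ' (fun t => ((p + q).choose t : R) * b t) (p + q + 1)
          rw [Finset.sum_range_succ (fun t => ((p + q).choose t : R) * b t) (p + q + 1)] at h2
          simp only [Nat.choose_zero_right, Nat.cast_one, one_mul, Nat.choose_succ_self,
            Nat.cast_zero, zero_mul, add_zero] at h2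
          linear_combination h2

theorem binomial_newton_identity {R : Type*} [CommRing R] (a b : ℕ → R) (n : ℕ) :
    ∑ i ∈ Finset.range (n + 1), (n.choose i : R) *
        (∑ k ∈ Finset.range (i + 1), ∑ j ∈ Finset.range (k + 1),
          (i.choose k : R) * (k.choose j : R) * a k * b (i - j)) =
      (∑ s ∈ Finset.range (n + 1), (n.choose s : R) * a s) *
      (∑ t ∈ Finset.range (n + 1), (n.choose t : R) * b t) := by
  have key : ∀ k ∈ Finset.range (n + 1),
      (∑ i ∈ Finset.Ico k (n + 1), ∑ j ∈ Finset.range (k + 1),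
        (n.choose i : R) * (i.choose k : R) * (k.choose j : R) * a k * b (i - j))
      = ((n.choose k : R) * a k) *
          ∑ t ∈ Finset.range (n + 1), (n.choose t : R) * b t := by
    intro k hk
    rw [Finset.mem_range] at hk
    rw [Finset.sum_Ico_eq_sum_range, show n + 1 - k = (n - k) + 1 by omega]
    have hpt : ∀ d ∈ Finset.range (n - k + 1),
        (∑ j ∈ Finset.range (k + 1),
          (n.choose (k + d) : R) * ((k + d).choose k : R) * (k.choose j : R) * a k *
            b (k + d - j))
        = (n.choose k : R) * a k * ∑ j ∈ Finset.range (k + 1),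
            ((n - k).choose d : R) * (k.choose j : R) * b (d + j) := by
      intro d hd
      rw [Finset.mem_range] at hd
      have h1 : (n.choose (k + d) : R) * ((k + d).choose k : R)
          = (n.choose k : R) * ((n - k).choose d : R) := by
        rw [← Nat.cast_mul, ← Nat.cast_mul,
          Nat.choose_mul (n := n) (by omega : k ≤ k + d),
          Nat.add_sub_cancel_left]
      rw [← Finset.sum_range_reflect
        (fun j => (n.choose (k + d) : R) * ((k + d).choose k : R) * (k.choose j : R) * a k *
          b (k + d - j)) (k + 1)]
      rw [Finset.mul_sum]
      refine Finset.sum_congr rfl fun j hj => ?_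
      rw [Finset.mem_range] at hj
      rw [show k + 1 - 1 - j = k - j by omega,
        Nat.choose_symm (by omega : j ≤ k),
        show k + d - (k - j) = d + j by omega]
      linear_combination ((k.choose j : R) * a k * b (d + j)) * h1
    rw [Finset.sum_congr rfl hpt, ← Finset.mul_sum]
    congr 1
    have := aux_vand (n - k) b k
    rw [show n - k + k = n by omega] at this
    exact this
  calc
    ∑ i ∈ Finset.range (n + 1), (n.choose i : R) *
        (∑ k ∈ Finset.range (i + 1), ∑ j ∈ Finset.range (k + 1),
          (i.choose k : R) * (k.choose j : R) * a k * b (i - j))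
      = ∑ i ∈ Finset.range (n + 1), ∑ k ∈ Finset.range (i + 1),
          ∑ j ∈ Finset.range (k + 1),
            (n.choose i : R) * (i.choose k : R) * (k.choose j : R) * a k * b (i - j) := by
        refine Finset.sum_congr rfl fun i _ => ?_
        rw [Finset.mul_sum]
        refine Finset.sum_congr rfl fun k _ => ?_
        rw [Finset.mul_sum]
        refine Finset.sum_congr rfl fun j _ => ?_
        ring
    _ = ∑ k ∈ Finset.range (n + 1), ∑ i ∈ Finset.Ico k (n + 1),
          ∑ j ∈ Finset.range (k + 1),
            (n.choose i : R) * (i.choose k : R) * (k.choose j : R) * a k * b (i - j) := by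
        simp only [Finset.range_eq_Ico]
        rw [← Finset.sum_Ico_Ico_comm 0 (n + 1) (fun k i => ∑ j ∈ Finset.Ico 0 (k + 1),
          (n.choose i : R) * (i.choose k : R) * (k.choose j : R) * a k * b (i - j))]
    _ = ∑ k ∈ Finset.range (n + 1), ((n.choose k : R) * a k) *
          ∑ t ∈ Finset.range (n + 1), (n.choose t : R) * b t :=
        Finset.sum_congr rfl key
    _ = _ := by rw [← Finset.sum_mul]
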